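/- Let B ∈ ℝ^{k×k} satisfy Bᵀ1_k = 1_k (each column of B sums to 1) and ‖B(f,:)‖₂ ≤ B(f,:)ᵀ1_k for every row index f ∈ {1,…,k}. Then |det(B)| ≤ 1. Moreover, if |det(B)| = 1, then ‖B(f,:)‖₂ = B(f,:)ᵀ1_k = 1 for every f ∈ {1,…,k}. -/

import Mathlib

open scoped BigOperators ENNReal NNReal
open MeasureTheory Matrix

noncomputable section

/-- Euclidean (ℓ²) norm of a vector in `Fin m → ℝ`. -/
def l2 {m : ℕ} (x : Fin m → ℝ) : ℝ := Real.sqrt (∑ i, x i ^ 2)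

/-- The `f`-th standard basis vector of `ℝ^k`. -/
def eVec (k : ℕ) (f : Fin k) : Fin k → ℝ := fun i => if i = f then 1 else 0

/-- AM-GM with equality case. -/
lemma amgm_aux {k : ℕ} (μ : Fin k → ℝ) (h0 : ∀ i, 0 ≤ μ i)
    (hsum : ∑ i, μ i = k) :
    (∏ i, μ i ≤ 1) ∧ (∏ i, μ i = 1 → ∀ i, μ i = 1) := by
  have key : ∏ i, Real.exp (μ i - 1) = 1 := by
    rw [← Real.exp_sum]
    simp [Finset.sum_sub_distrib, hsum]
  have hle : ∀ i, μ i ≤ Real.exp (μ i - 1) := by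
    intro i
    have := Real.add_one_le_exp (μ i - 1)
    linarith
  constructor
  · calc ∏ i, μ i ≤ ∏ i, Real.exp (μ i - 1) :=
          Finset.prod_le_prod (fun i _ => h0 i) (fun i _ => hle i)
    _ = 1 := key
  · intro hprod i
    by_contra hne
    have hpos : ∀ j, 0 < μ j := by
      intro j
      rcases lt_or_eq_of_le (h0 j) with h | h
      · exact h
      · exfalso
        have : ∏ i, μ i = 0 := Finset.prod_eq_zero (Finset.mem_univ j) h.symm
        rw [hprod] at this; norm_num at this
    have hlt : μ i < Real.exp (μ i - 1) := by
      have := Real.add_one_lt_exp (x := μ i - 1) (by intro h; apply hne; linarith)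
      linarith
    have : ∏ j, μ j < ∏ j, Real.exp (μ j - 1) :=
      Finset.prod_lt_prod (fun j _ => hpos j) (fun j _ => hle j) ⟨i, Finset.mem_univ i, hlt⟩
    rw [hprod, key] at this; exact lt_irrefl _ this

/-- Hadamard for matrices with unit-norm rows. -/
lemma hadamard_aux {k : ℕ} (C : Matrix (Fin k) (Fin k) ℝ)
    (hC : ∀ f, ∑ j, C f j ^ 2 = 1) : |C.det| ≤ 1 := by
  set G := C * Cᴴ with hGdef
  have hG : G.PosSemidef := Matrix.posSemidef_self_mul_conjTranspose C
  have hH : G.IsHermitian := hG.1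
  -- trace of G two ways
  have htr : G.trace = (k : ℝ) := by
    simp only [hGdef, Matrix.trace, Matrix.diag, Matrix.mul_apply, Matrix.conjTranspose_apply,
      star_trivial]
    have : ∀ f, ∑ j, C f j * C f j = 1 := by
      intro f; have := hC f; simpa [sq] using this
    simp [this]
  have htr2 : G.trace = ∑ i, hH.eigenvalues i := by
    simpa using hH.trace_eq_sum_eigenvalues
  have hdet : G.det = C.det ^ 2 := by
    rw [hGdef, Matrix.det_mul, Matrix.det_conjTranspose, star_trivial, sq]
  have hdet2 : G.det = ∏ i, hH.eigenvalues i := by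
    have := hH.det_eq_prod_eigenvalues
    simpa using this
  have hnn : ∀ i, 0 ≤ hH.eigenvalues i := hG.eigenvalues_nonneg
  have hsum : ∑ i, hH.eigenvalues i = (k : ℝ) := by rw [← htr2, htr]
  have hprodle : ∏ i, hH.eigenvalues i ≤ 1 := (amgm_aux _ hnn hsum).1
  have : C.det ^ 2 ≤ 1 := by rw [← hdet, hdet2]; exact hprodle
  nlinarith [sq_abs C.det, abs_nonneg C.det]

theorem stmt17 {k : ℕ} (B : Matrix (Fin k) (Fin k) ℝ)
    (hcol : ∀ j, ∑ i, B i j = 1)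
    (hrow : ∀ f, l2 (B f) ≤ ∑ j, B f j) :
    |B.det| ≤ 1 ∧
    (|B.det| = 1 → ∀ f, l2 (B f) = 1 ∧ ∑ j, B f j = 1) := by
  rcases Nat.eq_zero_or_pos k with hk0 | hk
  · subst hk0
    refine ⟨by simp [Matrix.det_isEmpty], fun _ f => f.elim0⟩
  by_cases hzero : ∃ f, l2 (B f) = 0
  · obtain ⟨f, hf⟩ := hzero
    have hnn : 0 ≤ ∑ j, B f j ^ 2 := Finset.sum_nonneg fun _ _ => sq_nonneg _
    have hs : ∑ j, B f j ^ 2 = 0 := by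
      have h1 : Real.sqrt (∑ j, B f j ^ 2) = 0 := hf
      nlinarith [Real.sq_sqrt hnn]
    have hrow0 : ∀ j, B f j = 0 := by
      intro j
      have := (Finset.sum_eq_zero_iff_of_nonneg
        (fun i _ => sq_nonneg (B f i))).mp hs j (Finset.mem_univ j)
      exact pow_eq_zero_iff (two_ne_zero) |>.mp this
    have hdet : B.det = 0 := Matrix.det_eq_zero_of_row_eq_zero f hrow0
    refine ⟨by rw [hdet]; simp, fun h1 => ?_⟩
    rw [hdet] at h1; simp at h1
  push_neg at hzero
  have hl2nn : ∀ f, 0 ≤ l2 (B f) := fun f => Real.sqrt_nonneg _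
  have hlpos : ∀ f, 0 < l2 (B f) := fun f => lt_of_le_of_ne (hl2nn f) (Ne.symm (hzero f))
  have hl2sq : ∀ f, (l2 (B f)) ^ 2 = ∑ j, B f j ^ 2 := by
    intro f
    exact Real.sq_sqrt (Finset.sum_nonneg fun _ _ => sq_nonneg _)
  -- normalized matrix
  set C : Matrix (Fin k) (Fin k) ℝ := Matrix.of fun f j => B f j / l2 (B f) with hCdef
  have hCrow : ∀ f, ∑ j, C f j ^ 2 = 1 := by
    intro f
    have h1 : ∑ j, C f j ^ 2 = (∑ j, B f j ^ 2) / (l2 (B f)) ^ 2 := by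
      simp [hCdef, div_pow, ← Finset.sum_div]
    rw [h1, ← hl2sq f, div_self (pow_ne_zero 2 (hzero f))]
  have hCdet : C.det = (∏ f, (l2 (B f))⁻¹) * B.det := by
    have h2 : C = Matrix.diagonal (fun f => (l2 (B f))⁻¹) * B := by
      ext f j
      simp [hCdef, Matrix.mul_apply, Matrix.diagonal, div_eq_inv_mul,
        Finset.sum_ite_eq, Finset.mem_univ]
    rw [h2, Matrix.det_mul, Matrix.det_diagonal]
  have hHad : |C.det| ≤ 1 := hadamard_aux C hCrow
  have hplpos : 0 < ∏ f, l2 (B f) := Finset.prod_pos fun f _ => hlpos f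
  have hBled : |B.det| ≤ ∏ f, l2 (B f) := by
    have h3 : |C.det| = (∏ f, l2 (B f))⁻¹ * |B.det| := by
      rw [hCdet, abs_mul,
        abs_of_pos (Finset.prod_pos fun f _ => inv_pos.mpr (hlpos f)),
        Finset.prod_inv_distrib]
    rw [h3] at hHad
    calc |B.det| = (∏ f, l2 (B f)) * ((∏ f, l2 (B f))⁻¹ * |B.det|) := by
          field_simp
    _ ≤ (∏ f, l2 (B f)) * 1 := by
          exact mul_le_mul_of_nonneg_left hHad (le_of_lt hplpos)
    _ = ∏ f, l2 (B f) := mul_one _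
  have hsnn : ∀ f, 0 ≤ ∑ j, B f j := fun f => le_trans (hl2nn f) (hrow f)
  have hssum : ∑ f, ∑ j, B f j = (k : ℝ) := by
    exact Finset.sum_comm.trans (by simp [hcol])
  have hamgm := amgm_aux (fun f => ∑ j, B f j) hsnn hssum
  have hls : ∏ f, l2 (B f) ≤ ∏ f, ∑ j, B f j :=
    Finset.prod_le_prod (fun f _ => hl2nn f) (fun f _ => hrow f)
  refine ⟨le_trans hBled (le_trans hls hamgm.1), fun h1 => ?_⟩
  have h1a : 1 ≤ ∏ f, l2 (B f) := h1 ▸ hBled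
  have hps : ∏ f, ∑ j, B f j = 1 := le_antisymm hamgm.1 (le_trans h1a hls)
  have hseq : ∀ f, ∑ j, B f j = 1 := hamgm.2 hps
  have hpl : ∏ f, l2 (B f) = 1 := le_antisymm (le_trans hls (le_of_eq hps)) h1a
  intro f
  have hl_le1 : ∀ g, l2 (B g) ≤ 1 := fun g => (hseq g) ▸ hrow g
  have h2 : ∏ g ∈ Finset.univ.erase f, l2 (B g) ≤ 1 :=
    Finset.prod_le_one (fun g _ => hl2nn g) (fun g _ => hl_le1 g)
  have h3 : ∏ g, l2 (B g) = l2 (B f) * ∏ g ∈ Finset.univ.erase f, l2 (B g) :=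
    (Finset.mul_prod_erase _ _ (Finset.mem_univ f)).symm
  have h4 : 1 ≤ l2 (B f) := by nlinarith [hl2nn f]
  exact ⟨le_antisymm (hl_le1 f) h4, hseq f⟩
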